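/- arXiv:2509.19976 — 3 statements merged into one kernel-verified Lean document; each statement's English description precedes it below -/
import Mathlib

section
/- Let M be invertible, let ΔM = β·S·R with S an n×k matrix, R a k×n matrix, and β > 0 a scalar such that M + β·S·R is invertible and R·M⁻¹·S is invertible. Then as β → ∞, (M + β·S·R)⁻¹ converges to M⁻¹ − M⁻¹·S·(R·M⁻¹·S)⁻¹·R·M⁻¹. -/
open Matrix Filter

/-- As the series susceptance `β → ∞`, the inverse `(M + β S R)⁻¹` converges to
`M⁻¹ - M⁻¹ S (R M⁻¹ S)⁻¹ R M⁻¹`. -/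
theorem closing_limit {n k : ℕ}
    (M : Matrix (Fin n) (Fin n) ℝ)
    (S : Matrix (Fin n) (Fin k) ℝ)
    (R : Matrix (Fin k) (Fin n) ℝ)
    (hM : IsUnit M)
    (hβ : ∀ β : ℝ, 0 < β → IsUnit (M + β • (S * R)))
    (hRMS : IsUnit (R * M⁻¹ * S)) :
    Tendsto (fun β : ℝ => (M + β • (S * R))⁻¹) atTop
      (nhds (M⁻¹ - M⁻¹ * S * (R * M⁻¹ * S)⁻¹ * R * M⁻¹)) := by
  set A := R * M⁻¹ * S with hA
  -- the perturbed Schur-type matrix tends to `A`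
  have htend : Tendsto (fun β : ℝ => β⁻¹ • (1 : Matrix (Fin k) (Fin k) ℝ) + A) atTop (nhds A) := by
    have h1 : Tendsto (fun β : ℝ => β⁻¹ • (1 : Matrix (Fin k) (Fin k) ℝ)) atTop
        (nhds ((0 : ℝ) • (1 : Matrix (Fin k) (Fin k) ℝ))) :=
      tendsto_inv_atTop_zero.smul_const _
    simpa using h1.add_const A
  -- inversion is continuous at `A`
  have hcont : ContinuousAt Inv.inv A := by
    apply continuousAt_matrix_inv
    have hdet : IsUnit A.det := hRMS.map (Matrix.detMonoidHom)
    obtain ⟨u, hu⟩ := hdet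
    exact hu ▸ NormedRing.inverse_continuousAt u
  have hg : Tendsto (fun β : ℝ =>
      M⁻¹ - M⁻¹ * S * (β⁻¹ • (1 : Matrix (Fin k) (Fin k) ℝ) + A)⁻¹ * R * M⁻¹) atTop
      (nhds (M⁻¹ - M⁻¹ * S * A⁻¹ * R * M⁻¹)) := by
    have hinv : Tendsto (fun β : ℝ => (β⁻¹ • (1 : Matrix (Fin k) (Fin k) ℝ) + A)⁻¹) atTop
        (nhds A⁻¹) := hcont.tendsto.comp htend
    have hcm : Continuous fun X : Matrix (Fin k) (Fin k) ℝ =>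
        M⁻¹ - M⁻¹ * S * X * R * M⁻¹ := by
      exact continuous_const.sub (((continuous_const.matrix_mul continuous_id).matrix_mul
        continuous_const).matrix_mul continuous_const)
    exact (hcm.tendsto _).comp hinv
  -- eventual equality with the Woodbury formula
  have hdetA : A.det ≠ 0 := by
    simpa using (hRMS.map (Matrix.detMonoidHom)).ne_zero
  have hev : ∀ᶠ β : ℝ in atTop,
      (M + β • (S * R))⁻¹ =
        M⁻¹ - M⁻¹ * S * (β⁻¹ • (1 : Matrix (Fin k) (Fin k) ℝ) + A)⁻¹ * R * M⁻¹ := by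
    have hdet_ev : ∀ᶠ β : ℝ in atTop,
        (β⁻¹ • (1 : Matrix (Fin k) (Fin k) ℝ) + A).det ≠ 0 := by
      have : Tendsto (fun β : ℝ => (β⁻¹ • (1 : Matrix (Fin k) (Fin k) ℝ) + A).det) atTop
          (nhds A.det) := (Continuous.matrix_det continuous_id).continuousAt.tendsto.comp htend
      exact this.eventually_ne hdetA
    filter_upwards [hdet_ev, eventually_gt_atTop (0 : ℝ)] with β hdetβ hβpos
    have hβne : (β : ℝ) ≠ 0 := ne_of_gt hβpos
    have hC : IsUnit (β • (1 : Matrix (Fin k) (Fin k) ℝ)) := by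
      rw [Matrix.isUnit_iff_isUnit_det, Matrix.det_smul, Matrix.det_one, mul_one]
      exact isUnit_iff_ne_zero.2 (pow_ne_zero _ hβne)
    have hCinv : (β • (1 : Matrix (Fin k) (Fin k) ℝ))⁻¹ = β⁻¹ • (1 : Matrix (Fin k) (Fin k) ℝ) := by
      refine Matrix.inv_eq_left_inv ?_
      rw [Matrix.smul_mul, Matrix.mul_smul, smul_smul, inv_mul_cancel₀ hβne, one_smul,
        Matrix.one_mul]
    have hAC : IsUnit ((β • (1 : Matrix (Fin k) (Fin k) ℝ))⁻¹ + R * M⁻¹ * S) := by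
      rw [hCinv]
      exact (Matrix.isUnit_iff_isUnit_det _).2 (isUnit_iff_ne_zero.2 hdetβ)
    have hmain := Matrix.add_mul_mul_inv_eq_sub M S (β • (1 : Matrix (Fin k) (Fin k) ℝ)) R hM hC hAC
    have hrw : S * (β • (1 : Matrix (Fin k) (Fin k) ℝ)) * R = β • (S * R) := by
      simp [Matrix.mul_smul, Matrix.smul_mul]
    rw [hrw, hCinv] at hmain
    simpa [hA] using hmain
  exact Tendsto.congr' (Filter.EventuallyEq.symm hev) hg
end

section
/- If M_c is invertible and μ, ν are orthogonal vectors of squared norm 2 such that the 2×2 matrix [μ ν]ᵀ·(M_o − M_o·M_c⁻¹·M_o)·[μ ν] is invertible (where M_o = M_c + b·v²·(μμᵀ+ννᵀ) with b·v² > 0), then M_o is invertible and M_o⁻¹ = M_c⁻¹ + (1 − M_c⁻¹·M_o)·[μ ν]·([μ ν]ᵀ·(M_o − M_o·M_c⁻¹·M_o)·[μ ν])⁻¹·[μ ν]ᵀ·(1 − M_o·M_c⁻¹). -/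
open Matrix

/-- Bus-split inverse update formula: if `M_c` is invertible, `μ, ν` are orthogonal vectors
of squared norm 2, `M_o = M_c + b v² (μμᵀ + ννᵀ)` with `b v² > 0`, and the 2×2 matrix
`[μ ν]ᵀ (M_o - M_o M_c⁻¹ M_o) [μ ν]` is invertible, then `M_o` is invertible and
`M_o⁻¹ = M_c⁻¹ + (1 - M_c⁻¹ M_o) [μ ν] ([μ ν]ᵀ (M_o - M_o M_c⁻¹ M_o) [μ ν])⁻¹ [μ ν]ᵀ (1 - M_o M_c⁻¹)`. -/
theorem bus_split_inverse_update {n : ℕ}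
    (Mc Mo : Matrix (Fin n) (Fin n) ℝ)
    (μ ν : Fin n → ℝ)
    (b v : ℝ) (hbv : 0 < b * v ^ 2)
    (hμν : μ ⬝ᵥ ν = 0) (hμμ : μ ⬝ᵥ μ = 2) (hνν : ν ⬝ᵥ ν = 2)
    (hMc : IsUnit Mc)
    (hMo : Mo = Mc + (b * v ^ 2) • (vecMulVec μ μ + vecMulVec ν ν))
    (B : Matrix (Fin n) (Fin 2) ℝ)
    (hB : B = Matrix.of fun i j => ![μ i, ν i] j)
    (hW : IsUnit (Bᵀ * (Mo - Mo * Mc⁻¹ * Mo) * B)) :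
    IsUnit Mo ∧
      Mo⁻¹ = Mc⁻¹ + ((1 : Matrix (Fin n) (Fin n) ℝ) - Mc⁻¹ * Mo) * B
          * (Bᵀ * (Mo - Mo * Mc⁻¹ * Mo) * B)⁻¹
          * Bᵀ * ((1 : Matrix (Fin n) (Fin n) ℝ) - Mo * Mc⁻¹) := by
  set c : ℝ := b * v ^ 2 with hc
  have hc0 : c ≠ 0 := ne_of_gt hbv
  have h2c0 : (-(2 * c)) ≠ 0 := by simp [hc0]
  have hMcd : IsUnit Mc.det := (Matrix.isUnit_iff_isUnit_det Mc).mp hMc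
  have hMcMci : Mc * Mc⁻¹ = 1 := Matrix.mul_nonsing_inv Mc hMcd
  have hMciMc : Mc⁻¹ * Mc = 1 := Matrix.nonsing_inv_mul Mc hMcd
  -- basic B facts
  have hBBt : B * Bᵀ = vecMulVec μ μ + vecMulVec ν ν := by
    subst hB
    ext i k
    simp [Matrix.mul_apply, Fin.sum_univ_two, vecMulVec_apply]
  have hBtB : Bᵀ * B = (2 : ℝ) • (1 : Matrix (Fin 2) (Fin 2) ℝ) := by
    subst hB
    ext i k
    fin_cases i <;> fin_cases k <;>
      simp [Matrix.mul_apply, Matrix.one_apply] <;>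
      first
        | simpa [dotProduct] using hμμ
        | simpa [dotProduct] using hνν
        | simpa [dotProduct, mul_comm] using hμν
  have hcol : ∀ {m : Type} [Fintype m] (M : Matrix (Fin 2) m ℝ),
      Bᵀ * (B * M) = (2 : ℝ) • M := by
    intro m _ M
    rw [← Matrix.mul_assoc, hBtB, Matrix.smul_mul, Matrix.one_mul]
  have hMo' : Mo = Mc + c • (B * Bᵀ) := by rw [hMo, hBBt]
  -- abbreviations
  set W : Matrix (Fin 2) (Fin 2) ℝ := Bᵀ * (Mo - Mo * Mc⁻¹ * Mo) * B with hWdef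
  set K : Matrix (Fin 2) (Fin 2) ℝ := (2 : ℝ) • 1 + (2 * c) • (Bᵀ * (Mc⁻¹ * B)) with hKdef
  have h1r : (1 : Matrix (Fin n) (Fin n) ℝ) - Mo * Mc⁻¹ = (-c) • (B * (Bᵀ * Mc⁻¹)) := by
    rw [hMo', Matrix.add_mul, hMcMci, Matrix.smul_mul, Matrix.mul_assoc]
    module
  have h1l : (1 : Matrix (Fin n) (Fin n) ℝ) - Mc⁻¹ * Mo = (-c) • (Mc⁻¹ * (B * Bᵀ)) := by
    rw [hMo', Matrix.mul_add, hMciMc, Matrix.mul_smul]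
    module
  have hD : Mo - Mo * Mc⁻¹ * Mo = (-c) • (Mo * (Mc⁻¹ * (B * Bᵀ))) := by
    have h : Mo - Mo * Mc⁻¹ * Mo = Mo * (1 - Mc⁻¹ * Mo) := by
      rw [Matrix.mul_sub, Matrix.mul_one, Matrix.mul_assoc]
    rw [h, h1l, Matrix.mul_smul]
  have hMoMciB : Mo * (Mc⁻¹ * B) = B + c • (B * (Bᵀ * (Mc⁻¹ * B))) := by
    rw [hMo', Matrix.add_mul, ← Matrix.mul_assoc, hMcMci, Matrix.one_mul,
      Matrix.smul_mul, Matrix.mul_assoc]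
  have hBK : B * K = (2 : ℝ) • (Mo * (Mc⁻¹ * B)) := by
    rw [hKdef, Matrix.mul_add, Matrix.mul_smul, Matrix.mul_smul, Matrix.mul_one, hMoMciB]
    module
  have hWK : W = (-(2 * c)) • K := by
    rw [hWdef, hD]
    simp only [Matrix.mul_smul, Matrix.smul_mul]
    rw [show Bᵀ * (Mo * (Mc⁻¹ * (B * Bᵀ))) * B
        = Bᵀ * (Mo * (Mc⁻¹ * B)) * ((2:ℝ) • (1 : Matrix (Fin 2) (Fin 2) ℝ)) from by
      rw [← hBtB]; simp only [Matrix.mul_assoc]]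
    rw [hMoMciB, Matrix.mul_add]
    simp only [Matrix.mul_smul]
    rw [hcol, hBtB, hKdef]
    simp only [Matrix.add_mul, Matrix.smul_mul, Matrix.mul_one, Matrix.one_mul, smul_smul]
    module
  have hKd : IsUnit K.det := by
    have hWd : IsUnit W.det := (Matrix.isUnit_iff_isUnit_det W).mp hW
    rw [hWK, Matrix.det_smul] at hWd
    rw [isUnit_iff_ne_zero] at hWd ⊢
    intro h
    exact hWd (by rw [h, mul_zero])
  have hKKi : K * K⁻¹ = 1 := Matrix.mul_nonsing_inv K hKd
  have hWi : W⁻¹ = (-(2 * c))⁻¹ • K⁻¹ := by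
    apply Matrix.inv_eq_right_inv
    rw [hWK, Matrix.smul_mul, Matrix.mul_smul, hKKi, smul_smul, mul_inv_cancel₀ h2c0]
    simp
  have hMK : Mo * (Mc⁻¹ * B) * K⁻¹ = (2 : ℝ)⁻¹ • B := by
    rw [show Mo * (Mc⁻¹ * B) = (2:ℝ)⁻¹ • (B * K) from by rw [hBK, smul_smul]; norm_num,
      Matrix.smul_mul, Matrix.mul_assoc, hKKi, Matrix.mul_one]
  have e1 : ((1 : Matrix (Fin n) (Fin n) ℝ) - Mc⁻¹ * Mo) * B = (-(2 * c)) • (Mc⁻¹ * B) := by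
    rw [h1l, Matrix.smul_mul, Matrix.mul_assoc, Matrix.mul_assoc, hBtB]
    simp only [Matrix.mul_smul, Matrix.mul_one, smul_smul]
    module
  have e2 : Bᵀ * ((1 : Matrix (Fin n) (Fin n) ℝ) - Mo * Mc⁻¹) = (-(2 * c)) • (Bᵀ * Mc⁻¹) := by
    rw [h1r, Matrix.mul_smul, hcol, smul_smul]
    module
  set X : Matrix (Fin n) (Fin n) ℝ :=
    Mc⁻¹ + ((1 : Matrix (Fin n) (Fin n) ℝ) - Mc⁻¹ * Mo) * B * W⁻¹ * Bᵀ
      * ((1 : Matrix (Fin n) (Fin n) ℝ) - Mo * Mc⁻¹) with hX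
  have hMoX : Mo * X = 1 := by
    have key : Mo * (((1 : Matrix (Fin n) (Fin n) ℝ) - Mc⁻¹ * Mo) * B * W⁻¹ * Bᵀ
        * ((1 : Matrix (Fin n) (Fin n) ℝ) - Mo * Mc⁻¹)) = (-c) • (B * (Bᵀ * Mc⁻¹)) := by
      rw [e1, Matrix.mul_assoc _ Bᵀ _, e2, hWi]
      simp only [Matrix.smul_mul, Matrix.mul_smul, smul_smul]
      rw [show Mo * (Mc⁻¹ * B * K⁻¹ * (Bᵀ * Mc⁻¹)) = (Mo * (Mc⁻¹ * B) * K⁻¹) * (Bᵀ * Mc⁻¹)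
        from by simp only [Matrix.mul_assoc]]
      rw [hMK, Matrix.smul_mul, smul_smul]
      congr 1
      field_simp
    rw [hX, Matrix.mul_add, key, ← h1r]
    abel
  have hMod : IsUnit Mo.det := by
    have h := congrArg Matrix.det hMoX
    rw [Matrix.det_mul, Matrix.det_one] at h
    exact IsUnit.of_mul_eq_one _ h
  refine ⟨(Matrix.isUnit_iff_isUnit_det Mo).mpr hMod, ?_⟩
  rw [Matrix.inv_eq_right_inv hMoX, hX]
end

section
/- With the line-modification update of the previous setting and no change to the inhomogeneity (Δp̂ = Δq̂ = 0), the change in state variables projected onto any pair of vectors μ', ν' satisfies [μ'ᵀ(ψ,σ); ν'ᵀ(ψ,σ)] = −A'·(I₂ + D·A)⁻¹·D·[μᵀ(θ,u); νᵀ(θ,u)], where A' = [μ' ν']ᵀ·M⁻¹·[μ ν]. -/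
open Matrix

/-- Generalized line modification distribution factor: the state change
`y = (ψ,σ) = -(M + [μ ν] D [μ ν]ᵀ)⁻¹ [μ ν] D [μ ν]ᵀ x` projected onto a monitored pair
`μ', ν'` satisfies `(μ'ᵀ y, ν'ᵀ y) = -A' (I₂ + D A)⁻¹ D (μᵀ x, νᵀ x)` where
`A' = [μ' ν']ᵀ M⁻¹ [μ ν]` and `A = [μ ν]ᵀ M⁻¹ [μ ν]`. -/
theorem lmdf_projection {n : ℕ}
    (M : Matrix (Fin n) (Fin n) ℝ)
    (μ ν μ' ν' : Fin n → ℝ)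
    (D : Matrix (Fin 2) (Fin 2) ℝ)
    (B B' : Matrix (Fin n) (Fin 2) ℝ)
    (hB : B = Matrix.of fun i j => ![μ i, ν i] j)
    (hB' : B' = Matrix.of fun i j => ![μ' i, ν' i] j)
    (A A' : Matrix (Fin 2) (Fin 2) ℝ)
    (hA : A = Bᵀ * M⁻¹ * B)
    (hA' : A' = B'ᵀ * M⁻¹ * B)
    (hM : IsUnit M)
    (hDA : IsUnit ((1 : Matrix (Fin 2) (Fin 2) ℝ) + D * A))
    (x y : Fin n → ℝ)
    (hy : y = -((M + B * D * Bᵀ)⁻¹ * (B * D * Bᵀ)).mulVec x) :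
    ![μ' ⬝ᵥ y, ν' ⬝ᵥ y]
      = -((A' * ((1 : Matrix (Fin 2) (Fin 2) ℝ) + D * A)⁻¹ * D).mulVec ![μ ⬝ᵥ x, ν ⬝ᵥ x]) := by
  have hMdet : IsUnit M.det := (Matrix.isUnit_iff_isUnit_det M).mp hM
  have hDAdet : IsUnit ((1 : Matrix (Fin 2) (Fin 2) ℝ) + D * A).det :=
    (Matrix.isUnit_iff_isUnit_det _).mp hDA
  set N : Matrix (Fin n) (Fin n) ℝ := M + B * D * Bᵀ with hN
  have hfac : N = M * (1 + M⁻¹ * (B * D * Bᵀ)) := by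
    rw [Matrix.mul_add, Matrix.mul_one, Matrix.mul_nonsing_inv_cancel_left _ _ hMdet]
  have hdet2 : ((1 : Matrix (Fin n) (Fin n) ℝ) + M⁻¹ * (B * D * Bᵀ)).det
      = ((1 : Matrix (Fin 2) (Fin 2) ℝ) + D * A).det := by
    have h : M⁻¹ * (B * D * Bᵀ) = (M⁻¹ * B) * (D * Bᵀ) := by
      simp [Matrix.mul_assoc]
    rw [h, Matrix.det_one_add_mul_comm]
    congr 2
    rw [hA]
    simp [Matrix.mul_assoc]
  have hNunit : IsUnit N.det := by
    rw [hfac, Matrix.det_mul, hdet2]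
    exact hMdet.mul hDAdet
  have hcancel : ((1 : Matrix (Fin 2) (Fin 2) ℝ) + D * A)
      * ((1 : Matrix (Fin 2) (Fin 2) ℝ) + D * A)⁻¹ = 1 :=
    Matrix.mul_nonsing_inv _ hDAdet
  have h1 : N * (M⁻¹ * B) = B * ((1 : Matrix (Fin 2) (Fin 2) ℝ) + D * A) := by
    rw [hN, Matrix.add_mul, Matrix.mul_nonsing_inv_cancel_left _ _ hMdet,
      Matrix.mul_add, Matrix.mul_one, hA]
    simp [Matrix.mul_assoc]
  have hNX : N * (M⁻¹ * B * (((1 : Matrix (Fin 2) (Fin 2) ℝ) + D * A)⁻¹ * (D * Bᵀ)))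
      = B * D * Bᵀ := by
    rw [← Matrix.mul_assoc N, h1, Matrix.mul_assoc B, ← Matrix.mul_assoc _ _ (D * Bᵀ),
      hcancel, Matrix.one_mul, ← Matrix.mul_assoc]
  have hWood : N⁻¹ * (B * D * Bᵀ)
      = M⁻¹ * B * (((1 : Matrix (Fin 2) (Fin 2) ℝ) + D * A)⁻¹ * (D * Bᵀ)) := by
    rw [← hNX, Matrix.nonsing_inv_mul_cancel_left _ _ hNunit]
  have hBx : Bᵀ.mulVec x = ![μ ⬝ᵥ x, ν ⬝ᵥ x] := by
    funext j
    fin_cases j <;>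
      simp [hB, Matrix.mulVec, dotProduct, Matrix.transpose_apply, mul_comm]
  have hB'y : B'ᵀ.mulVec y = ![μ' ⬝ᵥ y, ν' ⬝ᵥ y] := by
    funext j
    fin_cases j <;>
      simp [hB', Matrix.mulVec, dotProduct, Matrix.transpose_apply, mul_comm]
  rw [← hB'y, hy, hWood]
  have hEq : B'ᵀ * (M⁻¹ * B * (((1:Matrix (Fin 2) (Fin 2) ℝ) + D * A)⁻¹ * (D * Bᵀ)))
      = (A' * ((1:Matrix (Fin 2) (Fin 2) ℝ) + D * A)⁻¹ * D) * Bᵀ := by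
    rw [hA']
    simp [Matrix.mul_assoc]
  rw [show B'ᵀ.mulVec (-((M⁻¹ * B * (((1:Matrix (Fin 2) (Fin 2) ℝ) + D * A)⁻¹ * (D * Bᵀ))).mulVec x))
      = -((B'ᵀ * (M⁻¹ * B * (((1:Matrix (Fin 2) (Fin 2) ℝ) + D * A)⁻¹ * (D * Bᵀ)))).mulVec x) by
    rw [Matrix.mulVec_neg, Matrix.mulVec_mulVec]]
  rw [hEq, ← Matrix.mulVec_mulVec, hBx]
end
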